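/- Bridge Target Score Identity (first form): let 0 < α < 1 and Y = αX₀ + (1 − α)X₁ + W with X₀, X₁, W independent with densities p₀, p₁, p_W. Then for every y ∈ ℝ^d, ∇ log p_Y(y) = α^{-1} ∬ ∇ log p₀(x₀) · p_{X₀,X₁|Y}(x₀, x₁ | y) dx₀ dx₁. -/

import Mathlib

set_option maxHeartbeats 1600000

open MeasureTheory Real
open scoped RealInnerProductSpace ENNReal

/-- The ambient Euclidean space. -/
abbrev Euc (d : ℕ) : Type := EuclideanSpace ℝ (Fin d)

section Aux
variable {d : ℕ}
local notation "E" => EuclideanSpace ℝ (Fin d)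

lemma aux_mp (w : E) :
    MeasurePreserving (fun p : E × E => (p.1 + w, p.2)) volume volume := by
  rw [Measure.volume_eq_prod]
  exact (measurePreserving_add_right volume w).prod (MeasurePreserving.id volume)

lemma aux_me (w : E) :
    MeasurableEmbedding (fun p : E × E => (p.1 + w, p.2)) :=
  ((MeasurableEquiv.addRight w).prodCongr (MeasurableEquiv.refl E)).measurableEmbedding

lemma aux_integral_transl {G : Type*} [NormedAddCommGroup G] [NormedSpace ℝ G]
    (w : E) (f : E × E → G) :
    (∫ p : E × E, f (p.1 + w, p.2)) = ∫ p : E × E, f p :=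
  (aux_mp w).integral_comp (aux_me w) f

lemma aux_lintegral_transl (w : E) (f : E × E → ℝ≥0∞) :
    ∫⁻ p : E × E, f (p.1 + w, p.2) = ∫⁻ p : E × E, f p :=
  (aux_mp w).lintegral_comp_emb (aux_me w) f

lemma aux_fderiv_inner (f : E → ℝ) (z v : E) :
    fderiv ℝ f z v = ⟪gradient f z, v⟫ := by
  rw [gradient, InnerProductSpace.toDual_symm_apply]

lemma aux_gradient_log (f : E → ℝ) (z : E) (hf : DifferentiableAt ℝ f z) (hz : f z ≠ 0) :
    gradient (fun x => Real.log (f x)) z = (f z)⁻¹ • gradient f z := by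
  have h2 : HasFDerivAt (fun x => Real.log (f x)) ((f z)⁻¹ • fderiv ℝ f z) z :=
    (Real.hasDerivAt_log hz).comp_hasFDerivAt z hf.hasFDerivAt
  have h3 := (hasFDerivAt_iff_hasGradientAt.mp h2).gradient
  rw [h3, map_smulₛₗ]
  simp [gradient]

lemma aux_ftc (f : E → ℝ) (hf : ContDiff ℝ 1 f) (x w : E) :
    f (x + w) - f x = ∫ t in (0:ℝ)..1, ⟪gradient f (x + t • w), w⟫ := by
  have hgc : Continuous fun z : E => gradient f z := by
    have := hf.continuous_fderiv one_ne_zero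
    exact (LinearIsometryEquiv.continuous _).comp this
  have hline : ∀ t : ℝ, HasDerivAt (fun s : ℝ => x + s • w) w t := by
    intro t
    simpa using ((hasDerivAt_id t).smul_const w).const_add x
  have hderiv : ∀ t ∈ Set.uIcc (0:ℝ) 1,
      HasDerivAt (fun s : ℝ => f (x + s • w)) (⟪gradient f (x + t • w), w⟫) t := by
    intro t _
    have h1 := ((hf.differentiable one_ne_zero) (x + t • w)).hasFDerivAt.comp_hasDerivAt t (hline t)
    rwa [aux_fderiv_inner f (x + t • w) w] at h1
  have hint : IntervalIntegrable (fun t : ℝ => ⟪gradient f (x + t • w), w⟫) volume 0 1 := by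
    apply Continuous.intervalIntegrable
    exact (hgc.comp (by continuity)).inner continuous_const
  have := intervalIntegral.integral_eq_sub_of_hasDerivAt hderiv hint
  rw [this]
  simp

lemma aux_K_integrable
    (α : ℝ) (hα : α ≠ 0)
    (p₀ p₁ pW : E → ℝ)
    (hp₁ : Continuous p₁) (hpW : Continuous pW)
    (hgrad : Continuous (fun x : E => gradient p₀ x))
    (hp₁n : ∀ x, 0 ≤ p₁ x) (hpWn : ∀ x, 0 ≤ pW x)
    (z h : E) (ε : ℝ) (hε : ‖h‖ < ε)
    (g : E × E → ℝ) (hg : Integrable g (volume : Measure (E × E)))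
    (hdom : ∀ y', dist y' z < ε → ∀ p : E × E,
        ‖gradient p₀ p.1‖ * p₁ p.2 * pW (y' - α • p.1 - (1 - α) • p.2) ≤ g p) :
    Integrable (fun q : (E × E) × ℝ =>
        ‖gradient p₀ (q.1.1 + q.2 • (α⁻¹ • h))‖ *
          (p₁ q.1.2 * pW (z - α • q.1.1 - (1 - α) • q.1.2)))
      (Measure.prod volume (volume.restrict (Set.Ioc (0:ℝ) 1))) := by
  have hαh : α • (α⁻¹ • h) = h := by
    rw [smul_smul, mul_inv_cancel₀ hα, one_smul]
  have hcont : Continuous (fun q : (E × E) × ℝ =>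
      ‖gradient p₀ (q.1.1 + q.2 • (α⁻¹ • h))‖ *
        (p₁ q.1.2 * pW (z - α • q.1.1 - (1 - α) • q.1.2))) := by
    apply Continuous.mul
    · exact (hgrad.comp (by fun_prop)).norm
    · exact ((hp₁.comp (by fun_prop)).mul (hpW.comp (by fun_prop)))
  have hnn : ∀ q : (E × E) × ℝ, 0 ≤ ‖gradient p₀ (q.1.1 + q.2 • (α⁻¹ • h))‖ *
      (p₁ q.1.2 * pW (z - α • q.1.1 - (1 - α) • q.1.2)) := fun q =>
    mul_nonneg (norm_nonneg _) (mul_nonneg (hp₁n _) (hpWn _))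
  have hC : ∫⁻ p : E × E, ENNReal.ofReal (g p) < ⊤ := by
    calc ∫⁻ p : E × E, ENNReal.ofReal (g p) ≤ ∫⁻ p : E × E, ‖g p‖₊ := by
          apply lintegral_mono
          intro p
          show ENNReal.ofReal (g p) ≤ (‖g p‖₊ : ℝ≥0∞)
          rw [← enorm_eq_nnnorm, Real.enorm_eq_ofReal_abs]
          exact ENNReal.ofReal_le_ofReal (le_abs_self _)
      _ < ⊤ := hg.2
  constructor
  · exact hcont.aestronglyMeasurable
  · rw [hasFiniteIntegral_iff_ofReal (Filter.Eventually.of_forall hnn)]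
    rw [lintegral_prod_symm _ (hcont.measurable.ennreal_ofReal.aemeasurable)]
    have hbound : ∀ t ∈ Set.Ioc (0:ℝ) 1,
        (∫⁻ p : E × E, ENNReal.ofReal (‖gradient p₀ (p.1 + t • (α⁻¹ • h))‖ *
          (p₁ p.2 * pW (z - α • p.1 - (1 - α) • p.2))))
        ≤ ∫⁻ p : E × E, ENNReal.ofReal (g p) := by
      intro t ht
      have key : ∀ p : E × E,
          (fun p : E × E => ENNReal.ofReal (‖gradient p₀ p.1‖ *
            (p₁ p.2 * pW (z + t • h - α • p.1 - (1 - α) • p.2)))) (p.1 + t • (α⁻¹ • h), p.2)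
          = ENNReal.ofReal (‖gradient p₀ (p.1 + t • (α⁻¹ • h))‖ *
            (p₁ p.2 * pW (z - α • p.1 - (1 - α) • p.2))) := by
        intro p
        have harg : z + t • h - α • (p.1 + t • (α⁻¹ • h)) - (1 - α) • p.2
            = z - α • p.1 - (1 - α) • p.2 := by
          rw [smul_add, smul_comm α t (α⁻¹ • h), hαh]
          abel
        show ENNReal.ofReal (‖gradient p₀ (p.1 + t • (α⁻¹ • h))‖ *
            (p₁ p.2 * pW (z + t • h - α • (p.1 + t • (α⁻¹ • h)) - (1 - α) • p.2))) = _
        rw [harg]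
      have := aux_lintegral_transl (t • (α⁻¹ • h)) (fun p : E × E =>
        ENNReal.ofReal (‖gradient p₀ p.1‖ *
          (p₁ p.2 * pW (z + t • h - α • p.1 - (1 - α) • p.2))))
      simp only [key] at this
      rw [this]
      apply lintegral_mono
      intro p
      apply ENNReal.ofReal_le_ofReal
      have hd : dist (z + t • h) z < ε := by
        rw [dist_eq_norm]
        simp only [add_sub_cancel_left]
        calc ‖t • h‖ = |t| * ‖h‖ := by rw [norm_smul, Real.norm_eq_abs]
          _ ≤ 1 * ‖h‖ := by
              apply mul_le_mul_of_nonneg_right _ (norm_nonneg _)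
              rw [abs_of_pos ht.1]; exact ht.2
          _ = ‖h‖ := one_mul _
          _ < ε := hε
      have := hdom (z + t • h) hd p
      calc ‖gradient p₀ p.1‖ * (p₁ p.2 * pW (z + t • h - α • p.1 - (1 - α) • p.2))
          = ‖gradient p₀ p.1‖ * p₁ p.2 * pW (z + t • h - α • p.1 - (1 - α) • p.2) := by ring
        _ ≤ g p := this
    calc ∫⁻ t in Set.Ioc (0:ℝ) 1, (∫⁻ p : E × E, ENNReal.ofReal
          (‖gradient p₀ (p.1 + t • (α⁻¹ • h))‖ *
            (p₁ p.2 * pW (z - α • p.1 - (1 - α) • p.2))))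
        ≤ ∫⁻ _ in Set.Ioc (0:ℝ) 1, (∫⁻ p : E × E, ENNReal.ofReal (g p)) := by
          apply lintegral_mono_ae
          filter_upwards [ae_restrict_mem measurableSet_Ioc] with t ht
          exact hbound t ht
      _ = (∫⁻ p : E × E, ENNReal.ofReal (g p)) * volume (Set.Ioc (0:ℝ) 1) := by
          rw [lintegral_const, Measure.restrict_apply_univ]
      _ < ⊤ := by
          rw [Real.volume_Ioc]
          exact ENNReal.mul_lt_top hC (by simp)

lemma aux_F_integrable
    (α : ℝ) (hα : 0 < α)
    (p₀ p₁ pW : E → ℝ)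
    (hp₀c : ContDiff ℝ 1 p₀) (hp₁ : Continuous p₁) (hpW : Continuous pW)
    (hgrad : Continuous (fun x : E => gradient p₀ x))
    (hp₀n : ∀ x, 0 ≤ p₀ x) (hp₁n : ∀ x, 0 ≤ p₁ x) (hpWn : ∀ x, 0 ≤ pW x)
    (hp₀i : Integrable p₀ (volume : Measure E)) (hp₁i : Integrable p₁ (volume : Measure E))
    (hpWi : Integrable pW (volume : Measure E))
    (hpWp : ∫ x, pW x = 1)
    (hDom : ∀ y : E, ∃ ε > 0,
      ∃ g : E × E → ℝ, Integrable g (volume : Measure (E × E)) ∧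
      ∀ y', dist y' y < ε → ∀ p : E × E,
        ‖gradient p₀ p.1‖ * p₁ p.2 * pW (y' - α • p.1 - (1 - α) • p.2) ≤ g p) :
    ∀ y : E, Integrable
      (fun p : E × E => p₀ p.1 * p₁ p.2 * pW (y - α • p.1 - (1 - α) • p.2)) volume := by
  set F : E → E × E → ℝ :=
    fun z p => p₀ p.1 * p₁ p.2 * pW (z - α • p.1 - (1 - α) • p.2) with hF
  have hp₀cont : Continuous p₀ := hp₀c.continuous
  have hFc : ∀ z : E, Continuous (F z) := by
    intro z; apply Continuous.mul; apply Continuous.mul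
    · exact hp₀cont.comp continuous_fst
    · exact hp₁.comp continuous_snd
    · exact hpW.comp (by fun_prop)
  have hFnn : ∀ z p, 0 ≤ F z p := fun z p =>
    mul_nonneg (mul_nonneg (hp₀n _) (hp₁n _)) (hpWn _)
  -- Step 1: propagation
  have step1 : ∀ z : E, ∃ ε > 0, ∀ z' : E, dist z' z < ε →
      (Integrable (F z) volume ↔ Integrable (F z') volume) := by
    intro z
    obtain ⟨ε, hεpos, g, hg, hdom⟩ := hDom z
    refine ⟨ε, hεpos, fun z' hz' => ?_⟩
    set h : E := z' - z with hh
    set w : E := α⁻¹ • h with hw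
    have hαh : α • w = h := by
      rw [hw, smul_smul, mul_inv_cancel₀ hα.ne', one_smul]
    have hnorm : ‖h‖ < ε := by rwa [hh, ← dist_eq_norm]
    have hK := aux_K_integrable α hα.ne' p₀ p₁ pW hp₁ hpW hgrad hp₁n hpWn z h ε hnorm g hg hdom
    have hM : Integrable (fun p : E × E => ∫ t in Set.Ioc (0:ℝ) 1,
        ‖gradient p₀ (p.1 + t • w)‖ * (p₁ p.2 * pW (z - α • p.1 - (1 - α) • p.2))) volume :=
      hK.integral_prod_left
    set Δ : E × E → ℝ := fun p =>
      (p₀ (p.1 + w) - p₀ p.1) * (p₁ p.2 * pW (z - α • p.1 - (1 - α) • p.2)) with hΔdef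
    have hΔ : Integrable Δ volume := by
      apply Integrable.mono' (hM.const_mul ‖w‖)
      · apply Continuous.aestronglyMeasurable
        apply Continuous.mul
        · exact (hp₀cont.comp (by fun_prop)).sub (hp₀cont.comp continuous_fst)
        · exact (hp₁.comp continuous_snd).mul (hpW.comp (by fun_prop))
      · apply Filter.Eventually.of_forall
        intro p
        have hc : (0:ℝ) ≤ p₁ p.2 * pW (z - α • p.1 - (1 - α) • p.2) :=
          mul_nonneg (hp₁n _) (hpWn _)
        have h1 : |p₀ (p.1 + w) - p₀ p.1| ≤ ∫ t in (0:ℝ)..1, ‖gradient p₀ (p.1 + t • w)‖ * ‖w‖ := by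
          rw [aux_ftc p₀ hp₀c p.1 w]
          calc |∫ t in (0:ℝ)..1, ⟪gradient p₀ (p.1 + t • w), w⟫|
              ≤ ∫ t in (0:ℝ)..1, |⟪gradient p₀ (p.1 + t • w), w⟫| :=
                intervalIntegral.abs_integral_le_integral_abs zero_le_one
            _ ≤ ∫ t in (0:ℝ)..1, ‖gradient p₀ (p.1 + t • w)‖ * ‖w‖ := by
                apply intervalIntegral.integral_mono_on zero_le_one
                · apply Continuous.intervalIntegrable
                  exact ((hgrad.comp (by fun_prop)).inner continuous_const).abs
                · apply Continuous.intervalIntegrable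
                  exact ((hgrad.comp (by fun_prop)).norm).mul continuous_const
                · intro t _
                  exact abs_real_inner_le_norm _ _
        calc ‖Δ p‖ = |p₀ (p.1 + w) - p₀ p.1| * (p₁ p.2 * pW (z - α • p.1 - (1 - α) • p.2)) := by
              rw [hΔdef]; simp only [Real.norm_eq_abs, abs_mul, abs_of_nonneg hc]
          _ ≤ (∫ t in (0:ℝ)..1, ‖gradient p₀ (p.1 + t • w)‖ * ‖w‖) *
              (p₁ p.2 * pW (z - α • p.1 - (1 - α) • p.2)) :=
              mul_le_mul_of_nonneg_right h1 hc
          _ = ‖w‖ * ∫ t in Set.Ioc (0:ℝ) 1,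
              ‖gradient p₀ (p.1 + t • w)‖ * (p₁ p.2 * pW (z - α • p.1 - (1 - α) • p.2)) := by
              rw [intervalIntegral.integral_of_le zero_le_one]
              rw [← integral_mul_const, ← integral_const_mul]
              congr 1; ext t; ring
    have hcomp : (fun p : E × E => F z' (p.1 + w, p.2)) = fun p => F z p + Δ p := by
      ext p
      have harg : z' - α • (p.1 + w) - (1 - α) • p.2 = z - α • p.1 - (1 - α) • p.2 := by
        rw [smul_add, hαh, hh]; abel
      simp only [hF, hΔdef, harg]
      ring
    constructor
    · intro hz
      have : Integrable (fun p : E × E => F z' (p.1 + w, p.2)) volume := by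
        rw [hcomp]; exact hz.add hΔ
      exact ((aux_mp w).integrable_comp_emb (aux_me w)).mp this
    · intro hz'
      have h2 : Integrable (fun p : E × E => F z' (p.1 + w, p.2)) volume :=
        ((aux_mp w).integrable_comp_emb (aux_me w)).mpr hz'
      rw [hcomp] at h2
      exact (h2.sub hΔ).congr (Filter.Eventually.of_forall fun p => by
        simp [Pi.sub_apply])
  -- Step 2: nonemptiness
  have step2 : ∃ y₀ : E, Integrable (F y₀) volume := by
    have hmeas : Measurable (fun q : E × (E × E) => ENNReal.ofReal (F q.1 q.2)) := by
      apply Measurable.ennreal_ofReal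
      apply Continuous.measurable
      apply Continuous.mul; apply Continuous.mul
      · exact hp₀cont.comp (by fun_prop)
      · exact hp₁.comp (by fun_prop)
      · exact hpW.comp (by fun_prop)
    have htot : ∫⁻ y : E, ∫⁻ p : E × E, ENNReal.ofReal (F y p) ≠ ⊤ := by
      have hswap : ∫⁻ y : E, ∫⁻ p : E × E, ENNReal.ofReal (F y p)
          = ∫⁻ p : E × E, ∫⁻ y : E, ENNReal.ofReal (F y p) :=
        lintegral_lintegral_swap hmeas.aemeasurable
      rw [hswap]
      have hinner : ∀ p : E × E, ∫⁻ y : E, ENNReal.ofReal (F y p)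
          = ENNReal.ofReal (p₀ p.1 * p₁ p.2) := by
        intro p
        have h1 : ∀ y : E, ENNReal.ofReal (F y p) = ENNReal.ofReal (p₀ p.1 * p₁ p.2) *
            ENNReal.ofReal (pW (y - (α • p.1 + (1 - α) • p.2))) := by
          intro y
          rw [hF, ← ENNReal.ofReal_mul (mul_nonneg (hp₀n _) (hp₁n _))]
          congr 2
          abel_nf
        simp only [h1]
        have hm3 : Measurable fun y : E =>
            ENNReal.ofReal (pW (y - (α • p.1 + (1 - α) • p.2))) :=
          ((hpW.comp (continuous_sub_right _)).measurable).ennreal_ofReal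
        rw [lintegral_const_mul _ hm3]
        have h2 : ∫⁻ y : E, ENNReal.ofReal (pW (y - (α • p.1 + (1 - α) • p.2)))
            = ∫⁻ y : E, ENNReal.ofReal (pW y) := by
          have := lintegral_add_right_eq_self (μ := (volume : Measure E))
            (fun y => ENNReal.ofReal (pW y)) (-(α • p.1 + (1 - α) • p.2))
          simpa [sub_eq_add_neg] using this
        rw [h2, ← ofReal_integral_eq_lintegral_ofReal hpWi (Filter.Eventually.of_forall hpWn),
          hpWp]
        simp
      simp only [hinner]
      have : ∫⁻ p : E × E, ENNReal.ofReal (p₀ p.1 * p₁ p.2)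
          = (∫⁻ x : E, ENNReal.ofReal (p₀ x)) * ∫⁻ x : E, ENNReal.ofReal (p₁ x) := by
        rw [Measure.volume_eq_prod]
        simp_rw [fun p : E × E => ENNReal.ofReal_mul (q := p₁ p.2) (hp₀n p.1)]
        exact lintegral_prod_mul (hp₀cont.measurable.ennreal_ofReal.aemeasurable)
          (hp₁.measurable.ennreal_ofReal.aemeasurable)
      rw [this,
        ← ofReal_integral_eq_lintegral_ofReal hp₀i (Filter.Eventually.of_forall hp₀n),
        ← ofReal_integral_eq_lintegral_ofReal hp₁i (Filter.Eventually.of_forall hp₁n)]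
      exact ENNReal.mul_ne_top ENNReal.ofReal_ne_top ENNReal.ofReal_ne_top
    have hmeas2 : Measurable fun y : E => ∫⁻ p : E × E, ENNReal.ofReal (F y p) := by
      rw [Measure.volume_eq_prod]
      exact Measurable.lintegral_prod_right hmeas
    have hae : ∀ᵐ y : E, (∫⁻ p : E × E, ENNReal.ofReal (F y p)) < ⊤ :=
      ae_lt_top hmeas2 htot
    have hne : (MeasureTheory.ae (volume : Measure E)).NeBot := by
      rw [ae_neBot]
      intro h0
      have h1 : (0:ℝ≥0∞) < volume (Set.univ : Set E) :=
        isOpen_univ.measure_pos volume ⟨0, trivial⟩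
      rw [h0] at h1; simp at h1
    obtain ⟨y₀, hy₀⟩ := hae.exists
    refine ⟨y₀, (hFc y₀).aestronglyMeasurable, ?_⟩
    rw [hasFiniteIntegral_iff_ofReal (Filter.Eventually.of_forall (hFnn y₀))]
    exact hy₀
  -- Step 3: clopen
  set S : Set E := {z | Integrable (F z) volume} with hS
  have hopen : IsOpen S := by
    rw [Metric.isOpen_iff]
    intro z hz
    obtain ⟨ε, hεpos, hprop⟩ := step1 z
    exact ⟨ε, hεpos, fun z' hz' => (hprop z' hz').mp hz⟩
  have hopenc : IsOpen Sᶜ := by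
    rw [Metric.isOpen_iff]
    intro z hz
    obtain ⟨ε, hεpos, hprop⟩ := step1 z
    exact ⟨ε, hεpos, fun z' hz' hmem => hz ((hprop z' hz').mpr hmem)⟩
  obtain ⟨y₀, hy₀⟩ := step2
  have : S = Set.univ := IsClopen.eq_univ ⟨isOpen_compl_iff.mp hopenc, hopen⟩ ⟨y₀, hy₀⟩
  intro y
  have : y ∈ S := this ▸ Set.mem_univ y
  exact this

/-- **Bridge Target Score Identity (first form)**: for `Y = αX₀ + (1-α)X₁ + W`,
`∇ log p_Y(y) = α⁻¹ ∬ ∇ log p₀(x₀) p_{X₀,X₁|Y}(x₀,x₁|y) dx₀ dx₁`. -/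
theorem bridge_target_score_identity_first
    (d : ℕ) (hd : 1 ≤ d) (α : ℝ) (hα₀ : 0 < α) (hα₁ : α < 1)
    (p₀ p₁ pW : EuclideanSpace ℝ (Fin d) → ℝ)
    (hp₀_pos : ∀ x, 0 < p₀ x) (hp₁_pos : ∀ x, 0 < p₁ x) (hpW_pos : ∀ w, 0 < pW w)
    (hp₀_diff : ContDiff ℝ 1 p₀) (hp₁_diff : ContDiff ℝ 1 p₁) (hpW_diff : ContDiff ℝ 1 pW)
    (hp₀_prob : ∫ x, p₀ x = 1) (hp₁_prob : ∫ x, p₁ x = 1) (hpW_prob : ∫ w, pW w = 1)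
    (pY : EuclideanSpace ℝ (Fin d) → ℝ)
    (hpY : ∀ y, pY y = ∫ p : EuclideanSpace ℝ (Fin d) × EuclideanSpace ℝ (Fin d),
      p₀ p.1 * p₁ p.2 * pW (y - α • p.1 - (1 - α) • p.2))
    (post : EuclideanSpace ℝ (Fin d) → EuclideanSpace ℝ (Fin d) → EuclideanSpace ℝ (Fin d) → ℝ)
    (hpost : ∀ x₀ x₁ y, post x₀ x₁ y
      = p₀ x₀ * p₁ x₁ * pW (y - α • x₀ - (1 - α) • x₁) / pY y)
    -- integrability conditions permitting differentiation under the integral sign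
    (hInt : ∀ y, Integrable (fun p : EuclideanSpace ℝ (Fin d) × EuclideanSpace ℝ (Fin d) =>
      ‖gradient p₀ p.1‖ * p₁ p.2 * pW (y - α • p.1 - (1 - α) • p.2)))
    (hDom : ∀ y, ∃ ε > 0,
      ∃ g : EuclideanSpace ℝ (Fin d) × EuclideanSpace ℝ (Fin d) → ℝ, Integrable g ∧
      ∀ y', dist y' y < ε → ∀ p : EuclideanSpace ℝ (Fin d) × EuclideanSpace ℝ (Fin d),
        ‖gradient p₀ p.1‖ * p₁ p.2 * pW (y' - α • p.1 - (1 - α) • p.2) ≤ g p) :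
    ∀ y, gradient (fun y' => Real.log (pY y')) y
      = α⁻¹ • ∫ p : EuclideanSpace ℝ (Fin d) × EuclideanSpace ℝ (Fin d),
          post p.1 p.2 y • gradient (fun x' => Real.log (p₀ x')) p.1 := by
  have hα : α ≠ 0 := hα₀.ne'
  have hp₀cont : Continuous p₀ := hp₀_diff.continuous
  have hp₁cont : Continuous p₁ := hp₁_diff.continuous
  have hpWcont : Continuous pW := hpW_diff.continuous
  have hgrad : Continuous fun x : (Euc d) => gradient p₀ x :=
    (LinearIsometryEquiv.continuous _).comp (hp₀_diff.continuous_fderiv one_ne_zero)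
  have hp₀i : Integrable p₀ (volume : Measure (Euc d)) := by
    by_contra hc
    rw [integral_undef hc] at hp₀_prob; norm_num at hp₀_prob
  have hp₁i : Integrable p₁ (volume : Measure (Euc d)) := by
    by_contra hc
    rw [integral_undef hc] at hp₁_prob; norm_num at hp₁_prob
  have hpWi : Integrable pW (volume : Measure (Euc d)) := by
    by_contra hc
    rw [integral_undef hc] at hpW_prob; norm_num at hpW_prob
  have hFint : ∀ z : (Euc d), Integrable
      (fun p : (Euc d) × (Euc d) => p₀ p.1 * p₁ p.2 * pW (z - α • p.1 - (1 - α) • p.2)) volume :=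
    aux_F_integrable α hα₀ p₀ p₁ pW hp₀_diff hp₁cont hpWcont hgrad
      (fun x => (hp₀_pos x).le) (fun x => (hp₁_pos x).le) (fun x => (hpW_pos x).le)
      hp₀i hp₁i hpWi hpW_prob hDom
  -- the vector-valued integrand and its integral A
  set G : (Euc d) → (Euc d) × (Euc d) → (Euc d) :=
    fun z p => (p₁ p.2 * pW (z - α • p.1 - (1 - α) • p.2)) • gradient p₀ p.1 with hGdef
  have hGcont : ∀ z : (Euc d), Continuous (G z) := by
    intro z
    exact ((hp₁cont.comp continuous_snd).mul (hpWcont.comp (by fun_prop))).smul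
      (hgrad.comp continuous_fst)
  have hGnorm : ∀ z : (Euc d), ∀ p : (Euc d) × (Euc d), ‖G z p‖
      = ‖gradient p₀ p.1‖ * p₁ p.2 * pW (z - α • p.1 - (1 - α) • p.2) := by
    intro z p
    rw [hGdef]
    simp only [norm_smul, Real.norm_eq_abs,
      abs_of_nonneg (mul_nonneg (hp₁_pos p.2).le (hpW_pos _).le)]
    ring
  have hGint : ∀ z : (Euc d), Integrable (G z) volume := by
    intro z
    apply Integrable.mono' (hInt z) (hGcont z).aestronglyMeasurable
    exact Filter.Eventually.of_forall fun p => le_of_eq (hGnorm z p)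
  set A : (Euc d) → (Euc d) := fun z => ∫ p : (Euc d) × (Euc d), G z p with hAdef
  have hpYpos : ∀ z : (Euc d), 0 < pY z := by
    intro z
    rw [hpY z]
    have hnn : 0 ≤ fun p : (Euc d) × (Euc d) => p₀ p.1 * p₁ p.2 * pW (z - α • p.1 - (1 - α) • p.2) :=
      fun p => mul_nonneg (mul_nonneg (hp₀_pos _).le (hp₁_pos _).le) (hpW_pos _).le
    rw [integral_pos_iff_support_of_nonneg hnn (hFint z)]
    have hsupp : Function.support
        (fun p : (Euc d) × (Euc d) => p₀ p.1 * p₁ p.2 * pW (z - α • p.1 - (1 - α) • p.2)) = Set.univ :=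
      Set.eq_univ_of_forall fun p =>
        (mul_pos (mul_pos (hp₀_pos _) (hp₁_pos _)) (hpW_pos _)).ne'
    rw [hsupp]
    exact isOpen_univ.measure_pos volume ⟨(0, 0), trivial⟩
  intro y
  obtain ⟨ε, hεpos, g, hg, hdom⟩ := hDom y
  -- continuity of A at y
  have hAcont : ContinuousAt A y := by
    apply continuousAt_of_dominated (bound := g)
    · exact Filter.Eventually.of_forall fun z => (hGcont z).aestronglyMeasurable
    · filter_upwards [Metric.ball_mem_nhds y hεpos] with z hz
      apply Filter.Eventually.of_forall
      intro p
      rw [hGnorm z p]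
      exact hdom z (Metric.mem_ball.mp hz) p
    · exact hg
    · apply Filter.Eventually.of_forall
      intro p
      apply Continuous.continuousAt
      exact ((hp₁cont.comp continuous_const).mul (hpWcont.comp (by fun_prop))).smul
        continuous_const
  -- the FTC identity
  have key : ∀ h : (Euc d), ‖h‖ < ε →
      (pY (y + h) - pY y = ∫ t in (0:ℝ)..1, ⟪A (y + t • h), α⁻¹ • h⟫) ∧
      IntervalIntegrable (fun t : ℝ => ⟪A (y + t • h), α⁻¹ • h⟫) volume 0 1 := by
    intro h hh
    set w : (Euc d) := α⁻¹ • h with hwdef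
    have hαh : α • w = h := by rw [hwdef, smul_smul, mul_inv_cancel₀ hα, one_smul]
    -- step (1) : translated representation of pY (y + h)
    have k1 : pY (y + h)
        = ∫ p : (Euc d) × (Euc d), p₀ (p.1 + w) * p₁ p.2 * pW (y - α • p.1 - (1 - α) • p.2) := by
      rw [hpY (y + h)]
      rw [← aux_integral_transl w
        (fun p : (Euc d) × (Euc d) => p₀ p.1 * p₁ p.2 * pW (y + h - α • p.1 - (1 - α) • p.2))]
      congr 1
      ext p
      have harg : y + h - α • (p.1 + w) - (1 - α) • p.2 = y - α • p.1 - (1 - α) • p.2 := by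
        rw [smul_add, hαh]; abel
      rw [harg]
    have htransint : Integrable
        (fun p : (Euc d) × (Euc d) => p₀ (p.1 + w) * p₁ p.2 * pW (y - α • p.1 - (1 - α) • p.2)) volume := by
      have h2 := ((aux_mp w).integrable_comp_emb (aux_me w)).mpr (hFint (y + h))
      apply h2.congr
      apply Filter.Eventually.of_forall
      intro p
      show p₀ (p.1 + w) * p₁ p.2 * pW (y + h - α • (p.1 + w) - (1 - α) • p.2) = _
      have harg : y + h - α • (p.1 + w) - (1 - α) • p.2 = y - α • p.1 - (1 - α) • p.2 := by
        rw [smul_add, hαh]; abel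
      rw [harg]
    -- step (2): difference as a single integral
    have k2 : pY (y + h) - pY y = ∫ p : (Euc d) × (Euc d),
        (p₀ (p.1 + w) - p₀ p.1) * (p₁ p.2 * pW (y - α • p.1 - (1 - α) • p.2)) := by
      rw [k1, hpY y, ← integral_sub htransint (hFint y)]
      congr 1; ext p; ring
    -- step (3): FTC pointwise
    have k3 : ∀ p : (Euc d) × (Euc d),
        (p₀ (p.1 + w) - p₀ p.1) * (p₁ p.2 * pW (y - α • p.1 - (1 - α) • p.2))
        = ∫ t in (0:ℝ)..1, ⟪gradient p₀ (p.1 + t • w), w⟫ *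
            (p₁ p.2 * pW (y - α • p.1 - (1 - α) • p.2)) := by
      intro p
      rw [aux_ftc p₀ hp₀_diff p.1 w, ← intervalIntegral.integral_mul_const]
    -- Fubini setup
    have hK := aux_K_integrable α hα p₀ p₁ pW hp₁cont hpWcont hgrad
      (fun x => (hp₁_pos x).le) (fun x => (hpW_pos x).le) y h ε hh g hg hdom
    set φ : ((Euc d) × (Euc d)) × ℝ → ℝ := fun q =>
      ⟪gradient p₀ (q.1.1 + q.2 • w), w⟫ *
        (p₁ q.1.2 * pW (y - α • q.1.1 - (1 - α) • q.1.2)) with hφdef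
    have hφint : Integrable φ (Measure.prod volume (volume.restrict (Set.Ioc (0:ℝ) 1))) := by
      apply Integrable.mono' (hK.const_mul ‖w‖)
      · apply Continuous.aestronglyMeasurable
        exact ((hgrad.comp (by fun_prop)).inner continuous_const).mul
          ((hp₁cont.comp (by fun_prop)).mul (hpWcont.comp (by fun_prop)))
      · apply Filter.Eventually.of_forall
        intro q
        have hc : (0:ℝ) ≤ p₁ q.1.2 * pW (y - α • q.1.1 - (1 - α) • q.1.2) :=
          mul_nonneg (hp₁_pos _).le (hpW_pos _).le
        calc ‖φ q‖ = |⟪gradient p₀ (q.1.1 + q.2 • w), w⟫| *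
              (p₁ q.1.2 * pW (y - α • q.1.1 - (1 - α) • q.1.2)) := by
              rw [hφdef]; simp only [Real.norm_eq_abs, abs_mul, abs_of_nonneg hc]
          _ ≤ (‖gradient p₀ (q.1.1 + q.2 • w)‖ * ‖w‖) *
              (p₁ q.1.2 * pW (y - α • q.1.1 - (1 - α) • q.1.2)) :=
              mul_le_mul_of_nonneg_right (abs_real_inner_le_norm _ _) hc
          _ = ‖w‖ * (‖gradient p₀ (q.1.1 + q.2 • w)‖ *
              (p₁ q.1.2 * pW (y - α • q.1.1 - (1 - α) • q.1.2))) := by ring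
    -- step (5): inner integral identity
    have k5 : ∀ t : ℝ, (∫ p : (Euc d) × (Euc d), φ (p, t)) = ⟪A (y + t • h), w⟫ := by
      intro t
      have htr := aux_integral_transl (t • w) (fun p : (Euc d) × (Euc d) =>
        ⟪gradient p₀ p.1, w⟫ * (p₁ p.2 * pW (y + t • h - α • p.1 - (1 - α) • p.2)))
      have harg : ∀ p : (Euc d) × (Euc d), y + t • h - α • (p.1 + t • w) - (1 - α) • p.2
          = y - α • p.1 - (1 - α) • p.2 := by
        intro p
        rw [smul_add, smul_comm α t w, hαh]; abel
      have heq1 : (∫ p : (Euc d) × (Euc d), φ (p, t)) = ∫ p : (Euc d) × (Euc d),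
          ⟪gradient p₀ p.1, w⟫ * (p₁ p.2 * pW (y + t • h - α • p.1 - (1 - α) • p.2)) := by
        rw [← htr]
        congr 1
        ext p
        show φ (p, t) = ⟪gradient p₀ (p.1 + t • w), w⟫ *
          (p₁ p.2 * pW (y + t • h - α • (p.1 + t • w) - (1 - α) • p.2))
        rw [harg p]
      rw [heq1]
      have heq2 : ∀ p : (Euc d) × (Euc d),
          ⟪gradient p₀ p.1, w⟫ * (p₁ p.2 * pW (y + t • h - α • p.1 - (1 - α) • p.2))
          = ⟪w, G (y + t • h) p⟫ := by
        intro p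
        rw [hGdef]
        simp only [real_inner_smul_right]
        rw [real_inner_comm]
        ring
      simp_rw [heq2]
      rw [integral_inner (hGint (y + t • h)) w, real_inner_comm]
    have hXint : IntervalIntegrable (fun t : ℝ => ⟪A (y + t • h), α⁻¹ • h⟫) volume 0 1 := by
      have h1 : Integrable (fun t : ℝ => ∫ p : (Euc d) × (Euc d), φ (p, t))
          (volume.restrict (Set.Ioc (0:ℝ) 1)) := hφint.integral_prod_right
      have h2 : Integrable (fun t : ℝ => ⟪A (y + t • h), α⁻¹ • h⟫)
          (volume.restrict (Set.Ioc (0:ℝ) 1)) :=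
        h1.congr (Filter.Eventually.of_forall fun t => k5 t)
      constructor
      · exact h2
      · rw [Set.Ioc_eq_empty (by norm_num : ¬ (1:ℝ) < 0)]
        exact integrableOn_empty
    refine ⟨?_, hXint⟩
    -- combine
    rw [k2]
    simp_rw [k3]
    have hswap := integral_integral_swap (f := fun (p : (Euc d) × (Euc d)) (t : ℝ) => φ (p, t))
      (μ := (volume : Measure ((Euc d) × (Euc d)))) (ν := volume.restrict (Set.Ioc (0:ℝ) 1)) hφint
    have hconv : ∀ p : (Euc d) × (Euc d), (∫ t in (0:ℝ)..1, ⟪gradient p₀ (p.1 + t • w), w⟫ *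
        (p₁ p.2 * pW (y - α • p.1 - (1 - α) • p.2)))
        = ∫ t in Set.Ioc (0:ℝ) 1, φ (p, t) := by
      intro p
      rw [intervalIntegral.integral_of_le zero_le_one]
    simp_rw [hconv]
    rw [hswap]
    rw [intervalIntegral.integral_of_le zero_le_one]
    first
    | rfl
    | (apply integral_congr_ae
       exact Filter.Eventually.of_forall fun t => k5 t)
  -- HasGradientAt pY (α⁻¹ • A y) y
  have hgradpY : HasGradientAt pY (α⁻¹ • A y) y := by
    rw [hasGradientAt_iff_isLittleO_nhds_zero, Asymptotics.isLittleO_iff]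
    intro c hc
    obtain ⟨ρ, hρpos, hρ⟩ := Metric.continuousAt_iff.mp hAcont (c * α) (by positivity)
    filter_upwards [Metric.ball_mem_nhds (0 : (Euc d)) (lt_min hεpos hρpos)] with h hhball
    have hhn : ‖h‖ < min ε ρ := by rwa [Metric.mem_ball, dist_zero_right] at hhball
    have hhe : ‖h‖ < ε := lt_of_lt_of_le hhn (min_le_left _ _)
    have hhr : ‖h‖ < ρ := lt_of_lt_of_le hhn (min_le_right _ _)
    obtain ⟨keq, kint⟩ := key h hhe
    have hconst : ⟪α⁻¹ • A y, h⟫ = ∫ _t in (0:ℝ)..1, ⟪A y, α⁻¹ • h⟫ := by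
      rw [intervalIntegral.integral_const, real_inner_smul_left, real_inner_smul_right]
      simp
    have hdiffeq : pY (y + h) - pY y - ⟪α⁻¹ • A y, h⟫
        = ∫ t in (0:ℝ)..1, (⟪A (y + t • h), α⁻¹ • h⟫ - ⟪A y, α⁻¹ • h⟫) := by
      rw [keq, hconst, ← intervalIntegral.integral_sub kint intervalIntegrable_const]
    rw [hdiffeq]
    have hbound : ∀ t ∈ Set.uIoc (0:ℝ) 1,
        ‖⟪A (y + t • h), α⁻¹ • h⟫ - ⟪A y, α⁻¹ • h⟫‖ ≤ c * ‖h‖ := by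
      intro t ht
      rw [Set.uIoc_of_le zero_le_one] at ht
      rw [← inner_sub_left]
      have h1 : dist (A (y + t • h)) (A y) < c * α := by
        apply hρ
        rw [dist_eq_norm, add_sub_cancel_left, norm_smul, Real.norm_eq_abs,
          abs_of_pos ht.1]
        calc t * ‖h‖ ≤ 1 * ‖h‖ := mul_le_mul_of_nonneg_right ht.2 (norm_nonneg _)
          _ = ‖h‖ := one_mul _
          _ < ρ := hhr
      have h2 : ‖A (y + t • h) - A y‖ < c * α := by rwa [← dist_eq_norm]
      calc ‖⟪A (y + t • h) - A y, α⁻¹ • h⟫‖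
          ≤ ‖A (y + t • h) - A y‖ * ‖α⁻¹ • h‖ := by
            rw [Real.norm_eq_abs]; exact abs_real_inner_le_norm _ _
        _ ≤ (c * α) * ‖α⁻¹ • h‖ := mul_le_mul_of_nonneg_right h2.le (norm_nonneg _)
        _ = (c * α) * (α⁻¹ * ‖h‖) := by
            rw [norm_smul, Real.norm_eq_abs, abs_of_pos (inv_pos.mpr hα₀)]
        _ = c * ‖h‖ := by field_simp
    calc ‖∫ t in (0:ℝ)..1, (⟪A (y + t • h), α⁻¹ • h⟫ - ⟪A y, α⁻¹ • h⟫)‖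
        ≤ c * ‖h‖ * |1 - 0| := intervalIntegral.norm_integral_le_of_norm_le_const hbound
      _ = c * ‖h‖ := by simp
  -- final assembly
  have hpt : ∀ p : (Euc d) × (Euc d),
      post p.1 p.2 y • gradient (fun x' => Real.log (p₀ x')) p.1 = (pY y)⁻¹ • G y p := by
    intro p
    rw [hpost p.1 p.2 y,
      aux_gradient_log p₀ p.1 (hp₀_diff.differentiable one_ne_zero p.1) (hp₀_pos p.1).ne', hGdef]
    rw [smul_smul, smul_smul]
    congr 1
    have h0 : p₀ p.1 ≠ 0 := (hp₀_pos p.1).ne'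
    calc p₀ p.1 * p₁ p.2 * pW (y - α • p.1 - (1 - α) • p.2) / pY y * (p₀ p.1)⁻¹
        = (p₀ p.1 * (p₀ p.1)⁻¹) * (p₁ p.2 * pW (y - α • p.1 - (1 - α) • p.2)) * (pY y)⁻¹ := by
          ring
      _ = (pY y)⁻¹ * (p₁ p.2 * pW (y - α • p.1 - (1 - α) • p.2)) := by
          rw [mul_inv_cancel₀ h0]; ring
  calc gradient (fun y' => Real.log (pY y')) y
      = (pY y)⁻¹ • gradient pY y :=
        aux_gradient_log pY y hgradpY.differentiableAt (hpYpos y).ne'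
    _ = (pY y)⁻¹ • (α⁻¹ • A y) := by rw [hgradpY.gradient]
    _ = α⁻¹ • ((pY y)⁻¹ • A y) := smul_comm _ _ _
    _ = α⁻¹ • ∫ p : (Euc d) × (Euc d),
          post p.1 p.2 y • gradient (fun x' => Real.log (p₀ x')) p.1 := by
        congr 1
        rw [hAdef, ← integral_smul]
        exact integral_congr_ae (Filter.Eventually.of_forall fun p => (hpt p).symm)

end Aux
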